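/- Let (x, y₁, y₂, y₃) and (x, y₁', y₂', y₃') be two K-hexahedron data on ℤ³ with the same vertex array x, all of whose values (including all face values) are nonzero. Then there exist sign sequences α, β, γ : ℤ → {−1,1} such that for all (a,b,c) ∈ ℤ³: y₁'(a,b,c) = β(b)·γ(c)·y₁(a,b,c), y₂'(a,b,c) = α(a)·γ(c)·y₂(a,b,c), and y₃'(a,b,c) = α(a)·β(b)·y₃(a,b,c). -/

import Mathlib

open Finset

noncomputable section

abbrev Z3 := ℤ × ℤ × ℤ

/-- The 8 sign vectors in {-1,1}³. -/
def signs3 : Finset Z3 :=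
  ({-1, 1} : Finset ℤ) ×ˢ (({-1, 1} : Finset ℤ) ×ˢ ({-1, 1} : Finset ℤ))

/-- The Kashaev expression at `v`. -/
def kashaevK (x : Z3 → ℂ) (v : Z3) : ℂ :=
  let a := x v * x (v + (1,1,1))
  let b := x (v + (1,0,0)) * x (v + (0,1,1))
  let c := x (v + (0,1,0)) * x (v + (1,0,1))
  let d := x (v + (0,0,1)) * x (v + (1,1,0))
  let s := x v * x (v + (0,1,1)) * x (v + (1,0,1)) * x (v + (1,1,0))
  let t := x (v + (1,1,1)) * x (v + (1,0,0)) * x (v + (0,1,0)) * x (v + (0,0,1))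
  2 * (a^2 + b^2 + c^2 + d^2) - (a + b + c + d)^2 - 4 * (s + t)

/-- The corner derivative `K^C_v` for the cube containing `v` and `v + ε`. -/
def cornerK (x : Z3 → ℂ) (v ε : Z3) : ℂ :=
  (1/2) * (x (v + ε) * (x v)^2
    - x v * (x (v + (ε.1, 0, 0)) * x (v + (0, ε.2.1, ε.2.2))
           + x (v + (0, ε.2.1, 0)) * x (v + (ε.1, 0, ε.2.2))
           + x (v + (0, 0, ε.2.2)) * x (v + (ε.1, ε.2.1, 0))))
  - x (v + (ε.1, 0, 0)) * x (v + (0, ε.2.1, 0)) * x (v + (0, 0, ε.2.2))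

/-- The 4 sign vectors in {-1,1}². -/
def signs2 : Finset (ℤ × ℤ) := ({-1, 1} : Finset ℤ) ×ˢ ({-1, 1} : Finset ℤ)

/-- The product over the 12 unit squares incident to `v`. -/
def faceProd (x : Z3 → ℂ) (v : Z3) : ℂ :=
  (∏ ε ∈ signs2, (x v * x (v + (ε.1, ε.2, 0)) + x (v + (ε.1, 0, 0)) * x (v + (0, ε.2, 0)))) *
  (∏ ε ∈ signs2, (x v * x (v + (ε.1, 0, ε.2)) + x (v + (ε.1, 0, 0)) * x (v + (0, 0, ε.2)))) *
  (∏ ε ∈ signs2, (x v * x (v + (0, ε.1, ε.2)) + x (v + (0, ε.1, 0)) * x (v + (0, 0, ε.2))))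

/-- The quantity `A` from the hexahedron recurrence. -/
def AK (x : Z3 → ℂ) (v : Z3) : ℂ :=
  2 * x (v + (1,0,0)) * x (v + (0,1,0)) * x (v + (0,0,1))
  + x v * (x (v + (1,0,0)) * x (v + (0,1,1)) + x (v + (0,1,0)) * x (v + (1,0,1))
      + x (v + (0,0,1)) * x (v + (1,1,0)))

/-- A K-hexahedron datum on ℤ³: vertex array `x` (nonvanishing) together with
face arrays `y₁ y₂ y₃` satisfying the K-hexahedron equations. -/
def KHexDatum (x y₁ y₂ y₃ : Z3 → ℂ) : Prop :=
  (∀ v, x v ≠ 0) ∧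
  (∀ v : Z3,
    ((y₁ v)^2 = x v * x (v + (0,1,1)) + x (v + (0,1,0)) * x (v + (0,0,1))) ∧
    ((y₂ v)^2 = x v * x (v + (1,0,1)) + x (v + (1,0,0)) * x (v + (0,0,1))) ∧
    ((y₃ v)^2 = x v * x (v + (1,1,0)) + x (v + (1,0,0)) * x (v + (0,1,0))) ∧
    (x v * y₁ (v + (1,0,0)) = y₂ v * y₃ v + y₁ v * x (v + (1,0,0))) ∧
    (x v * y₂ (v + (0,1,0)) = y₁ v * y₃ v + y₂ v * x (v + (0,1,0))) ∧
    (x v * y₃ (v + (0,0,1)) = y₁ v * y₂ v + y₃ v * x (v + (0,0,1))) ∧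
    ((x v)^2 * x (v + (1,1,1)) = AK x v + 2 * y₁ v * y₂ v * y₃ v))


private lemma constZ (F : ℤ → ℂ) (hF : ∀ n, F (n + 1) = F n) : ∀ n, F n = F 0 := by
  intro n
  induction n using Int.induction_on with
  | zero => rfl
  | succ i ih => rw [hF, ih]
  | pred i ih =>
      have h := hF (-(i : ℤ) - 1)
      have h2 : -(i : ℤ) - 1 + 1 = -(i : ℤ) := by ring
      rw [h2] at h
      rw [← h]; exact ih

private lemma factor_aux (e₁ e₂ e₃ : Z3 → ℂ)
    (sq1 : ∀ v, e₁ v ^ 2 = 1) (sq2 : ∀ v, e₂ v ^ 2 = 1) (sq3 : ∀ v, e₃ v ^ 2 = 1)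
    (p : ∀ v, e₁ v * e₂ v * e₃ v = 1)
    (s1 : ∀ a b c : ℤ, e₁ (a, b, c) = e₁ (0, b, c))
    (s2 : ∀ a b c : ℤ, e₂ (a, b, c) = e₂ (a, 0, c))
    (s3 : ∀ a b c : ℤ, e₃ (a, b, c) = e₃ (a, b, 0)) :
    ∀ a b c : ℤ,
      e₁ (a, b, c) = (e₃ (0, b, 0) * e₃ (0, 0, 0)) * e₁ (0, 0, c) ∧
      e₂ (a, b, c) = e₃ (a, 0, 0) * e₁ (0, 0, c) ∧
      e₃ (a, b, c) = e₃ (a, 0, 0) * (e₃ (0, b, 0) * e₃ (0, 0, 0)) := by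
  have rel1 : ∀ v, e₁ v = e₂ v * e₃ v := by
    intro v
    linear_combination e₂ v * e₃ v * p v - e₁ v * e₃ v ^ 2 * sq2 v - e₁ v * sq3 v
  have rel2 : ∀ v, e₂ v = e₁ v * e₃ v := by
    intro v
    linear_combination e₁ v * e₃ v * p v - e₂ v * e₃ v ^ 2 * sq1 v - e₂ v * sq3 v
  have rel3 : ∀ v, e₃ v = e₁ v * e₂ v := by
    intro v
    linear_combination e₁ v * e₂ v * p v - e₃ v * e₂ v ^ 2 * sq1 v - e₃ v * sq2 v
  intro a b c
  have h2c : e₂ (0, 0, c) = e₁ (0, 0, c) * e₃ (0, 0, 0) := by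
    rw [rel2 (0, 0, c)]
    have := s3 0 0 c
    rw [this]
  refine ⟨?_, ?_, ?_⟩
  · rw [s1 a b c, rel1 (0, b, c), s2 0 b c, s3 0 b c, h2c]
    ring
  · rw [s2 a b c, rel2 (a, 0, c), s1 a 0 c, s3 a 0 c]
    ring
  · rw [s3 a b c, rel3 (a, b, 0), s1 a b 0, s2 a b 0]
    rw [rel1 (0, b, 0), s2 0 b 0, rel2 (a, 0, 0), s1 a 0 0]
    have h0 : e₃ (0, 0, 0) = e₁ (0, 0, 0) * e₂ (0, 0, 0) := rel3 (0, 0, 0)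
    rw [h0]
    ring

/-- Theorem extensions_that_agree (b). -/
theorem statement5 (x y₁ y₂ y₃ y₁' y₂' y₃' : Z3 → ℂ)
    (h : KHexDatum x y₁ y₂ y₃) (h' : KHexDatum x y₁' y₂' y₃')
    (hy : ∀ v : Z3, y₁ v ≠ 0 ∧ y₂ v ≠ 0 ∧ y₃ v ≠ 0)
    (hy' : ∀ v : Z3, y₁' v ≠ 0 ∧ y₂' v ≠ 0 ∧ y₃' v ≠ 0) :
    ∃ α β γ : ℤ → ℂ,
      (∀ n, α n = 1 ∨ α n = -1) ∧
      (∀ n, β n = 1 ∨ β n = -1) ∧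
      (∀ n, γ n = 1 ∨ γ n = -1) ∧
      (∀ v : Z3,
        y₁' v = β v.2.1 * γ v.2.2 * y₁ v ∧
        y₂' v = α v.1 * γ v.2.2 * y₂ v ∧
        y₃' v = α v.1 * β v.2.1 * y₃ v) := by
  obtain ⟨hx, hk⟩ := h
  obtain ⟨-, hk'⟩ := h'
  set e₁ : Z3 → ℂ := fun v => y₁' v / y₁ v with he₁
  set e₂ : Z3 → ℂ := fun v => y₂' v / y₂ v with he₂
  set e₃ : Z3 → ℂ := fun v => y₃' v / y₃ v with he₃
  have hd1 : ∀ v, y₁' v = e₁ v * y₁ v := fun v => (div_mul_cancel₀ _ (hy v).1).symm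
  have hd2 : ∀ v, y₂' v = e₂ v * y₂ v := fun v => (div_mul_cancel₀ _ (hy v).2.1).symm
  have hd3 : ∀ v, y₃' v = e₃ v * y₃ v := fun v => (div_mul_cancel₀ _ (hy v).2.2).symm
  have sq1 : ∀ v, e₁ v ^ 2 = 1 := by
    intro v
    have hs : (y₁' v) ^ 2 = (y₁ v) ^ 2 := ((hk' v).1).trans ((hk v).1).symm
    simp only [he₁]
    rw [div_pow, hs, div_self (pow_ne_zero 2 (hy v).1)]
  have sq2 : ∀ v, e₂ v ^ 2 = 1 := by
    intro v
    have hs : (y₂' v) ^ 2 = (y₂ v) ^ 2 := ((hk' v).2.1).trans ((hk v).2.1).symm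
    simp only [he₂]
    rw [div_pow, hs, div_self (pow_ne_zero 2 (hy v).2.1)]
  have sq3 : ∀ v, e₃ v ^ 2 = 1 := by
    intro v
    have hs : (y₃' v) ^ 2 = (y₃ v) ^ 2 := ((hk' v).2.2.1).trans ((hk v).2.2.1).symm
    simp only [he₃]
    rw [div_pow, hs, div_self (pow_ne_zero 2 (hy v).2.2)]
  have p : ∀ v, e₁ v * e₂ v * e₃ v = 1 := by
    intro v
    have hprod : y₁' v * y₂' v * y₃' v = y₁ v * y₂ v * y₃ v := by
      have H7 := (hk v).2.2.2.2.2.2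
      have H7' := (hk' v).2.2.2.2.2.2
      linear_combination (H7 - H7') / 2
    have n1 := (hy v).1
    have n2 := (hy v).2.1
    have n3 := (hy v).2.2
    simp only [he₁, he₂, he₃]
    field_simp
    linear_combination hprod
  -- the sign ratios
  have rel1 : ∀ v, e₁ v = e₂ v * e₃ v := by
    intro v
    linear_combination e₂ v * e₃ v * p v - e₁ v * e₃ v ^ 2 * sq2 v - e₁ v * sq3 v
  have rel2 : ∀ v, e₂ v = e₁ v * e₃ v := by
    intro v
    linear_combination e₁ v * e₃ v * p v - e₂ v * e₃ v ^ 2 * sq1 v - e₂ v * sq3 v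
  have rel3 : ∀ v, e₃ v = e₁ v * e₂ v := by
    intro v
    linear_combination e₁ v * e₂ v * p v - e₃ v * e₂ v ^ 2 * sq1 v - e₃ v * sq2 v
  -- shift invariance
  have shift1 : ∀ v : Z3, e₁ (v + (1, 0, 0)) = e₁ v := by
    intro v
    have H4 := (hk v).2.2.2.1
    have H4' := (hk' v).2.2.2.1
    rw [hd1 v, hd2 v, hd3 v] at H4'
    have key : x v * y₁' (v + (1, 0, 0)) = x v * (e₁ v * y₁ (v + (1, 0, 0))) := by
      have h23 : e₂ v * e₃ v = e₁ v := (rel1 v).symm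
      linear_combination H4' - e₁ v * H4 + y₂ v * y₃ v * h23
    have key2 : y₁' (v + (1, 0, 0)) = e₁ v * y₁ (v + (1, 0, 0)) :=
      mul_left_cancel₀ (hx v) key
    simp only [he₁]
    rw [key2, mul_div_cancel_right₀ _ (hy (v + (1, 0, 0))).1]
  have shift2 : ∀ v : Z3, e₂ (v + (0, 1, 0)) = e₂ v := by
    intro v
    have H5 := (hk v).2.2.2.2.1
    have H5' := (hk' v).2.2.2.2.1
    rw [hd1 v, hd2 v, hd3 v] at H5'
    have key : x v * y₂' (v + (0, 1, 0)) = x v * (e₂ v * y₂ (v + (0, 1, 0))) := by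
      have h13 : e₁ v * e₃ v = e₂ v := (rel2 v).symm
      linear_combination H5' - e₂ v * H5 + y₁ v * y₃ v * h13
    have key2 : y₂' (v + (0, 1, 0)) = e₂ v * y₂ (v + (0, 1, 0)) :=
      mul_left_cancel₀ (hx v) key
    simp only [he₂]
    rw [key2, mul_div_cancel_right₀ _ (hy (v + (0, 1, 0))).2.1]
  have shift3 : ∀ v : Z3, e₃ (v + (0, 0, 1)) = e₃ v := by
    intro v
    have H6 := (hk v).2.2.2.2.2.1
    have H6' := (hk' v).2.2.2.2.2.1
    rw [hd1 v, hd2 v, hd3 v] at H6'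
    have key : x v * y₃' (v + (0, 0, 1)) = x v * (e₃ v * y₃ (v + (0, 0, 1))) := by
      have h12 : e₁ v * e₂ v = e₃ v := (rel3 v).symm
      linear_combination H6' - e₃ v * H6 + y₁ v * y₂ v * h12
    have key2 : y₃' (v + (0, 0, 1)) = e₃ v * y₃ (v + (0, 0, 1)) :=
      mul_left_cancel₀ (hx v) key
    simp only [he₃]
    rw [key2, mul_div_cancel_right₀ _ (hy (v + (0, 0, 1))).2.2]
  -- constancy in one coordinate each
  have s1 : ∀ a b c : ℤ, e₁ (a, b, c) = e₁ (0, b, c) := by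
    intro a b c
    refine constZ (fun n => e₁ (n, b, c)) (fun n => ?_) a
    have := shift1 ((n, b, c) : Z3)
    have hv : ((n, b, c) : Z3) + (1, 0, 0) = ((n + 1, b, c) : Z3) := by
      simp [Prod.ext_iff]
    rw [hv] at this
    exact this
  have s2 : ∀ a b c : ℤ, e₂ (a, b, c) = e₂ (a, 0, c) := by
    intro a b c
    refine constZ (fun n => e₂ (a, n, c)) (fun n => ?_) b
    have := shift2 ((a, n, c) : Z3)
    have hv : ((a, n, c) : Z3) + (0, 1, 0) = ((a, n + 1, c) : Z3) := by
      simp [Prod.ext_iff]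
    rw [hv] at this
    exact this
  have s3 : ∀ a b c : ℤ, e₃ (a, b, c) = e₃ (a, b, 0) := by
    intro a b c
    refine constZ (fun n => e₃ (a, b, n)) (fun n => ?_) c
    have := shift3 ((a, b, n) : Z3)
    have hv : ((a, b, n) : Z3) + (0, 0, 1) = ((a, b, n + 1) : Z3) := by
      simp [Prod.ext_iff]
    rw [hv] at this
    exact this
  have factored := factor_aux e₁ e₂ e₃ sq1 sq2 sq3 p s1 s2 s3
  have pm : ∀ w : ℂ, w ^ 2 = 1 → w = 1 ∨ w = -1 := by
    intro w hw
    have : w * w = 1 := by rw [← sq]; exact hw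
    exact mul_self_eq_one_iff.mp this
  refine ⟨fun a => e₃ (a, 0, 0), fun b => e₃ (0, b, 0) * e₃ (0, 0, 0),
    fun c => e₁ (0, 0, c), fun a => pm _ (sq3 _), fun b => ?_, fun c => pm _ (sq1 _), ?_⟩
  · have hmul : ∀ u w : ℂ, (u = 1 ∨ u = -1) → (w = 1 ∨ w = -1) →
        (u * w = 1 ∨ u * w = -1) := by
      rintro u w (rfl | rfl) (rfl | rfl) <;> norm_num
    exact hmul _ _ (pm _ (sq3 _)) (pm _ (sq3 _))
  · rintro ⟨a, b, c⟩
    obtain ⟨f1, f2, f3⟩ := factored a b c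
    refine ⟨?_, ?_, ?_⟩
    · rw [hd1 (a, b, c)]
      rw [show e₁ ((a, b, c) : Z3) = e₁ (a, b, c) from rfl] at *
      rw [f1]
    · rw [hd2 (a, b, c), f2]
    · rw [hd3 (a, b, c), f3]
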